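/- Let n ≥ 2, 1 ≤ p ≤ n−1, θ₀ ∈ (0, π/2) with cos θ₀ = √(p/n), and define τ(φ) = arctan((cos 2φ − cos 2θ₀)/sin 2φ) for φ ∈ (0, θ₀]. Then φ ↦ φ + τ(φ) is strictly decreasing on (0, θ₀], τ(θ₀) = 0, and φ + τ(φ) ≥ θ₀ for all φ ∈ (0, θ₀]. -/

import Mathlib

theorem tau_properties (n p : ℕ) (hn : 2 ≤ n) (hp1 : 1 ≤ p) (hp2 : p ≤ n - 1)
    (θ₀ : ℝ) (hθ₀ : θ₀ ∈ Set.Ioo 0 (Real.pi / 2))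
    (hcos : Real.cos θ₀ = Real.sqrt ((p : ℝ) / n))
    (τ : ℝ → ℝ)
    (hτ : ∀ φ ∈ Set.Ioc (0 : ℝ) θ₀,
      τ φ = Real.arctan ((Real.cos (2 * φ) - Real.cos (2 * θ₀)) / Real.sin (2 * φ))) :
    StrictAntiOn (fun φ => φ + τ φ) (Set.Ioc 0 θ₀) ∧
    τ θ₀ = 0 ∧
    ∀ φ ∈ Set.Ioc (0 : ℝ) θ₀, θ₀ ≤ φ + τ φ := by
  obtain ⟨hθ0, hθpi⟩ := hθ₀
  set c := Real.cos (2 * θ₀) with hc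
  have hpltn : p < n := by omega
  have hnR : (0:ℝ) < n := by positivity
  have hpn0 : 0 < (p:ℝ)/n := by
    apply div_pos _ hnR
    exact_mod_cast Nat.lt_of_lt_of_le Nat.zero_lt_one hp1
  have hpn1 : (p:ℝ)/n < 1 := by
    rw [div_lt_one hnR]; exact_mod_cast hpltn
  have hc2 : c = 2 * ((p:ℝ)/n) - 1 := by
    rw [hc, Real.cos_two_mul, hcos, Real.sq_sqrt hpn0.le]
  have hc1 : c < 1 := by rw [hc2]; linarith
  have hcm1 : -1 < c := by rw [hc2]; linarith
  have hsin : ∀ φ ∈ Set.Ioc (0:ℝ) θ₀, 0 < Real.sin (2 * φ) := by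
    intro φ hφ
    exact Real.sin_pos_of_pos_of_lt_pi (by linarith [hφ.1]) (by linarith [hφ.2, Real.pi_pos])
  set F : ℝ → ℝ := fun φ => φ + Real.arctan ((Real.cos (2 * φ) - c) / Real.sin (2 * φ)) with hF
  have hFeq : ∀ φ ∈ Set.Ioc (0:ℝ) θ₀, φ + τ φ = F φ := by
    intro φ hφ; rw [hτ φ hφ]
  have hτθ : τ θ₀ = 0 := by
    rw [hτ θ₀ ⟨hθ0, le_refl _⟩, sub_self, zero_div, Real.arctan_zero]
  have hanti : StrictAntiOn F (Set.Ioc 0 θ₀) := by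
    apply strictAntiOn_of_deriv_neg (convex_Ioc 0 θ₀)
    · apply ContinuousOn.add continuousOn_id
      apply Real.continuous_arctan.comp_continuousOn
      apply ContinuousOn.div
      · exact ((Real.continuous_cos.comp (continuous_const.mul continuous_id)).sub
          continuous_const).continuousOn
      · exact (Real.continuous_sin.comp (continuous_const.mul continuous_id)).continuousOn
      · intro x hx; exact (hsin x hx).ne'
    · intro x hx
      rw [interior_Ioc] at hx
      have hsx : 0 < Real.sin (2 * x) := hsin x ⟨hx.1, hx.2.le⟩
      have h2x : HasDerivAt (fun y : ℝ => 2 * y) 2 x := by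
        simpa using (hasDerivAt_id x).const_mul 2
      have hcosd : HasDerivAt (fun y => Real.cos (2 * y)) (-Real.sin (2 * x) * 2) x :=
        (Real.hasDerivAt_cos (2 * x)).comp x h2x
      have hsind : HasDerivAt (fun y => Real.sin (2 * y)) (Real.cos (2 * x) * 2) x :=
        (Real.hasDerivAt_sin (2 * x)).comp x h2x
      have hgd : HasDerivAt (fun y => (Real.cos (2 * y) - c) / Real.sin (2 * y))
          ((-Real.sin (2 * x) * 2 * Real.sin (2 * x) -
            (Real.cos (2 * x) - c) * (Real.cos (2 * x) * 2)) / Real.sin (2 * x) ^ 2) x :=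
        (hcosd.sub_const c).div hsind hsx.ne'
      have hFd : HasDerivAt F
          (1 + 1 / (1 + ((Real.cos (2 * x) - c) / Real.sin (2 * x)) ^ 2) *
            ((-Real.sin (2 * x) * 2 * Real.sin (2 * x) -
              (Real.cos (2 * x) - c) * (Real.cos (2 * x) * 2)) / Real.sin (2 * x) ^ 2)) x :=
        (hasDerivAt_id x).add hgd.arctan
      rw [hFd.deriv]
      set s := Real.sin (2 * x)
      set u := Real.cos (2 * x)
      have hpyth : s ^ 2 + u ^ 2 = 1 := Real.sin_sq_add_cos_sq (2 * x)
      have hden : (0:ℝ) < 1 + c ^ 2 - 2 * c * u := by nlinarith [sq_nonneg (u - c)]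
      have heq : 1 + 1 / (1 + ((u - c) / s) ^ 2) *
          ((-s * 2 * s - (u - c) * (u * 2)) / s ^ 2) = (c ^ 2 - 1) / (1 + c ^ 2 - 2 * c * u) := by
        have hs2 : s ^ 2 ≠ 0 := by positivity
        field_simp
        rw [eq_div_iff (by linarith)]
        linear_combination (-(1 + c ^ 2 - 2 * c * u + c ^ 2 - 1)) * hpyth
      rw [heq]
      exact div_neg_of_neg_of_pos (by nlinarith) hden
  refine ⟨?_, hτθ, ?_⟩
  · intro a ha b hb hab
    simp only []
    rw [hFeq a ha, hFeq b hb]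
    exact hanti ha hb hab
  · intro φ hφ
    have h2 : F θ₀ = θ₀ := by
      rw [hF]; simp [← hc, sub_self, Real.arctan_zero]
    rcases eq_or_lt_of_le hφ.2 with h | h
    · rw [h, hτθ]; simp
    · have h3 := hanti hφ ⟨hθ0, le_refl _⟩ h
      rw [hFeq φ hφ]
      linarith
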